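/- Let r, s ≤ n and let P be an n×n partial Latin square whose nonempty cells are exactly the cells (i,j) with 1 ≤ i ≤ r and 1 ≤ j ≤ s (all of which are filled), forming the r×s subrectangle Q. Then P is completable if and only if each of the symbols 1,…,n occurs at least r + s − n times among the cells of Q. -/

import Mathlib

/-- An `n × n` partial Latin square: each cell holds at most one symbol from `Fin n`,
and each symbol occurs at most once in every row and at most once in every column. -/
def IsPartialLatinSquare {n : ℕ} (P : Fin n → Fin n → Option (Fin n)) : Prop :=
  (∀ (i j j' : Fin n) (s : Fin n), P i j = some s → P i j' = some s → j = j') ∧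
  (∀ (i i' j : Fin n) (s : Fin n), P i j = some s → P i' j = some s → i = i')

/-- An `n × n` Latin square. -/
def IsLatinSquare {n : ℕ} (L : Fin n → Fin n → Fin n) : Prop :=
  (∀ i : Fin n, Function.Injective (L i)) ∧
  (∀ j : Fin n, Function.Injective fun i => L i j)

/-- `P` is completable if some Latin square agrees with `P` on all its nonempty cells. -/
def Completable {n : ℕ} (P : Fin n → Fin n → Option (Fin n)) : Prop :=
  ∃ L : Fin n → Fin n → Fin n, IsLatinSquare L ∧ ∀ i j s, P i j = some s → L i j = s

section RyserAux
open Finset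


lemma myTransport {ι κ : Type*} [Fintype ι] [Fintype κ] [DecidableEq ι] [DecidableEq κ]
    (ρ : ι → ℕ) (e : κ → ℕ) (h : ∑ i, ρ i = ∑ t, e t) :
    ∃ X : ι → κ → ℕ, (∀ i, ∑ t, X i t = ρ i) ∧ (∀ t, ∑ i, X i t = e t) := by
  generalize hN : ∑ i, ρ i = N at *
  induction N generalizing ρ e with
  | zero =>
    refine ⟨fun _ _ => 0, ?_, ?_⟩
    · intro i
      simp [(Finset.sum_eq_zero_iff.mp hN i (mem_univ i))]
    · intro t
      simp [(Finset.sum_eq_zero_iff.mp h.symm t (mem_univ t))]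
  | succ N ih =>
    have h1 : ∃ i0, 0 < ρ i0 := by
      by_contra hc
      push_neg at hc
      have : ∑ i, ρ i = 0 := Finset.sum_eq_zero (fun i _ => Nat.le_zero.mp (hc i))
      omega
    have h2 : ∃ t0, 0 < e t0 := by
      by_contra hc
      push_neg at hc
      have : ∑ t, e t = 0 := Finset.sum_eq_zero (fun t _ => Nat.le_zero.mp (hc t))
      omega
    obtain ⟨i0, hi0⟩ := h1
    obtain ⟨t0, ht0⟩ := h2
    set ρ' := Function.update ρ i0 (ρ i0 - 1) with hρ'
    set e' := Function.update e t0 (e t0 - 1) with he'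
    have hsρ : ∑ i, ρ' i + 1 = ∑ i, ρ i := by
      have ha : ∑ x ∈ univ.erase i0, ρ' x = ∑ x ∈ univ.erase i0, ρ x :=
        Finset.sum_congr rfl (fun x hx => by
          simp [hρ', Function.update_of_ne (Finset.ne_of_mem_erase hx)])
      have hb := Finset.sum_erase_add univ ρ (mem_univ i0)
      have hb' := Finset.sum_erase_add univ ρ' (mem_univ i0)
      have hc : ρ' i0 + 1 = ρ i0 := by simp [hρ']; omega
      omega
    have hse : ∑ t, e' t + 1 = ∑ t, e t := by
      have ha : ∑ x ∈ univ.erase t0, e' x = ∑ x ∈ univ.erase t0, e x :=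
        Finset.sum_congr rfl (fun x hx => by
          simp [he', Function.update_of_ne (Finset.ne_of_mem_erase hx)])
      have hb := Finset.sum_erase_add univ e (mem_univ t0)
      have hb' := Finset.sum_erase_add univ e' (mem_univ t0)
      have hc : e' t0 + 1 = e t0 := by simp [he']; omega
      omega
    obtain ⟨X, hX1, hX2⟩ := ih ρ' e' (by omega) (by omega)
    refine ⟨fun i t => X i t + (if i = i0 ∧ t = t0 then 1 else 0), ?_, ?_⟩
    · intro i
      rw [Finset.sum_add_distrib, hX1]
      by_cases hi : i = i0
      · subst hi
        simp [hρ']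
        omega
      · simp [hi, hρ', Function.update_of_ne hi]
    · intro t
      rw [Finset.sum_add_distrib, hX2]
      by_cases ht : t = t0
      · subst ht
        simp [he']
        omega
      · simp [ht, he', Function.update_of_ne ht]

lemma myPermStep {n d : ℕ} (hd : 0 < d) (M : Fin n → Fin n → ℕ)
    (hrow : ∀ i, ∑ t, M i t = d) (hcol : ∀ t, ∑ i, M i t = d) :
    ∃ σ : Equiv.Perm (Fin n), ∀ i, 0 < M i (σ i) := by
  classical
  set A : Fin n → Finset (Fin n) := fun i => univ.filter fun t => 0 < M i t with hA
  have hall : ∀ S : Finset (Fin n), S.card ≤ (S.biUnion A).card := by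
    intro S
    have key : S.card * d ≤ (S.biUnion A).card * d := by
      calc S.card * d = ∑ i ∈ S, ∑ t, M i t := by
            rw [Finset.sum_congr rfl (fun i _ => hrow i)]; simp [mul_comm]
        _ = ∑ i ∈ S, ∑ t ∈ A i, M i t := by
            refine Finset.sum_congr rfl (fun i _ => ?_)
            refine (Finset.sum_subset (Finset.filter_subset _ _) ?_).symm
            intro t _ ht
            simp [hA] at ht
            omega
        _ ≤ ∑ i ∈ S, ∑ t ∈ S.biUnion A, M i t := by
            refine Finset.sum_le_sum (fun i hi => ?_)
            refine Finset.sum_le_sum_of_subset (fun t ht => ?_)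
            exact Finset.mem_biUnion.mpr ⟨i, hi, ht⟩
        _ = ∑ t ∈ S.biUnion A, ∑ i ∈ S, M i t := Finset.sum_comm
        _ ≤ ∑ t ∈ S.biUnion A, d := by
            refine Finset.sum_le_sum (fun t _ => ?_)
            rw [← hcol t]
            exact Finset.sum_le_sum_of_subset (Finset.subset_univ S)
        _ = (S.biUnion A).card * d := by simp [mul_comm]
    exact Nat.le_of_mul_le_mul_right key hd
  obtain ⟨f, hfinj, hf⟩ := (Finset.all_card_le_biUnion_card_iff_exists_injective A).mp hall
  refine ⟨Equiv.ofBijective f ((Finite.injective_iff_bijective).mp hfinj), fun i => ?_⟩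
  have := hf i
  simp [hA] at this
  exact this

lemma myDecompose {n : ℕ} (d : ℕ) (M : Fin n → Fin n → ℕ)
    (hrow : ∀ i, ∑ t, M i t = d) (hcol : ∀ t, ∑ i, M i t = d) :
    ∃ σ : Fin d → Equiv.Perm (Fin n),
      ∀ i t, (∑ k, if σ k i = t then 1 else 0) = M i t := by
  classical
  induction d generalizing M with
  | zero =>
    refine ⟨fun k => k.elim0, fun i t => ?_⟩
    have := Finset.sum_eq_zero_iff.mp (hrow i) t (mem_univ t)
    simp [this]
  | succ d ih =>
    obtain ⟨σ0, hσ0⟩ := myPermStep (Nat.succ_pos d) M hrow hcol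
    set M' : Fin n → Fin n → ℕ := fun i t => M i t - (if σ0 i = t then 1 else 0) with hM'
    have hrow' : ∀ i, ∑ t, M' i t = d := by
      intro i
      have h1 : ∑ t, M' i t + 1 = ∑ t, M i t := by
        have ha : ∑ x ∈ univ.erase (σ0 i), M' i x = ∑ x ∈ univ.erase (σ0 i), M i x :=
          Finset.sum_congr rfl (fun x hx => by
            have hne : σ0 i ≠ x := fun h => (Finset.ne_of_mem_erase hx) h.symm
            simp [hM', hne])
        have hb := Finset.sum_erase_add univ (M i) (mem_univ (σ0 i))
        have hb' := Finset.sum_erase_add univ (M' i) (mem_univ (σ0 i))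
        have hc : M' i (σ0 i) + 1 = M i (σ0 i) := by
          have := hσ0 i
          simp [hM']
          omega
        omega
      have := hrow i
      omega
    have hcol' : ∀ t, ∑ i, M' i t = d := by
      intro t
      have h1 : ∑ i, M' i t + 1 = ∑ i, M i t := by
        have ha : ∑ x ∈ univ.erase (σ0.symm t), M' x t = ∑ x ∈ univ.erase (σ0.symm t), M x t :=
          Finset.sum_congr rfl (fun x hx => by
            have hne : σ0 x ≠ t := by
              intro h
              exact (Finset.ne_of_mem_erase hx) (by simp [← h])
            simp [hM', hne])
        have hb : ∑ x ∈ univ.erase (σ0.symm t), M x t + M (σ0.symm t) t = ∑ x, M x t :=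
          Finset.sum_erase_add univ (fun x => M x t) (mem_univ (σ0.symm t))
        have hb' : ∑ x ∈ univ.erase (σ0.symm t), M' x t + M' (σ0.symm t) t = ∑ x, M' x t :=
          Finset.sum_erase_add univ (fun x => M' x t) (mem_univ (σ0.symm t))
        have hc : M' (σ0.symm t) t + 1 = M (σ0.symm t) t := by
          have h2 : σ0 (σ0.symm t) = t := σ0.apply_symm_apply t
          have hge := hσ0 (σ0.symm t)
          rw [h2] at hge
          have he : M' (σ0.symm t) t = M (σ0.symm t) t - 1 := by simp [hM', h2]
          omega
        omega
      have := hcol t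
      omega
    obtain ⟨σ', hσ'⟩ := ih M' hrow' hcol'
    refine ⟨Fin.cons σ0 σ', fun i t => ?_⟩
    rw [Fin.sum_univ_succ]
    simp only [Fin.cons_zero, Fin.cons_succ]
    rw [hσ' i t]
    have := hσ0 i
    by_cases h : σ0 i = t
    · subst h
      simp [hM']
      omega
    · simp [hM', h]

lemma myCardValLt (n a : ℕ) (ha : a ≤ n) :
    ((Finset.univ : Finset (Fin n)).filter fun j => j.val < a).card = a := by
  rw [← Finset.card_range a]
  refine Finset.card_bij (fun j _ => j.val) ?_ ?_ ?_
  · intro j hj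
    simp at hj ⊢
    exact hj
  · intro j1 h1 j2 h2 h
    exact Fin.ext h
  · intro m hm
    simp at hm
    exact ⟨⟨m, lt_of_lt_of_le hm ha⟩, by simp [hm], rfl⟩

lemma myCardValGe (n a : ℕ) (ha : a ≤ n) :
    ((Finset.univ : Finset (Fin n)).filter fun j => ¬ j.val < a).card = n - a := by
  have h1 := Finset.card_filter_add_card_filter_not
    (s := (Finset.univ : Finset (Fin n))) (p := fun j => j.val < a)
  rw [myCardValLt n a ha, Finset.card_univ, Fintype.card_fin] at h1
  omega

theorem fwd (n r s : ℕ) (hr : r ≤ n) (hs : s ≤ n)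
    (P : Fin n → Fin n → Option (Fin n))
    (hP : IsPartialLatinSquare P)
    (hfill : ∀ i j : Fin n, P i j ≠ none ↔ (i.val < r ∧ j.val < s))
    (hC : Completable P) :
    ∀ t : Fin n,
        r + s - n ≤ (Finset.univ.filter fun p : Fin n × Fin n => P p.1 p.2 = some t).card := by
  classical
  obtain ⟨L, ⟨hLrow, hLcol⟩, hLP⟩ := hC
  intro t
  set A := univ.filter fun p : Fin n × Fin n => P p.1 p.2 = some t with hA
  set W := univ.filter fun p : Fin n × Fin n => p.1.val < r ∧ L p.1 p.2 = t with hW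
  have hAW : A = W.filter fun p => p.2.val < s := by
    ext p
    simp only [hA, hW, Finset.mem_filter, Finset.mem_univ, true_and]
    constructor
    · intro hp
      have h1 := (hfill p.1 p.2).mp (by simp [hp])
      exact ⟨⟨h1.1, hLP _ _ _ hp⟩, h1.2⟩
    · rintro ⟨⟨h1, h2⟩, h3⟩
      have h4 : P p.1 p.2 ≠ none := (hfill p.1 p.2).mpr ⟨h1, h3⟩
      obtain ⟨u, hu⟩ := Option.ne_none_iff_exists'.mp h4
      rw [hu]
      have h5 := hLP _ _ _ hu
      rw [h2] at h5
      rw [h5]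
  have hsplit := Finset.card_filter_add_card_filter_not
    (s := W) (p := fun p : Fin n × Fin n => p.2.val < s)
  have hWcard : W.card = r := by
    rw [← myCardValLt n r hr]
    refine Finset.card_bij (fun p _ => p.1) ?_ ?_ ?_
    · intro p hp
      simp only [hW, Finset.mem_filter, Finset.mem_univ, true_and] at hp
      simp [hp.1]
    · intro p hp q hq hpq
      have hpq' : p.1 = q.1 := hpq
      simp only [hW, Finset.mem_filter, Finset.mem_univ, true_and] at hp hq
      have : L p.1 p.2 = L p.1 q.2 := by rw [hp.2, hpq']; exact hq.2.symm
      have h2 := hLrow p.1 this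
      exact Prod.ext hpq' h2
    · intro i hi
      simp only [Finset.mem_filter, Finset.mem_univ, true_and] at hi
      obtain ⟨j, hj⟩ := (Finite.injective_iff_bijective.mp (hLrow i)).2 t
      exact ⟨(i, j), by simp [hW, hi, hj], rfl⟩
  have hB : (W.filter fun p : Fin n × Fin n => ¬ p.2.val < s).card ≤ n - s := by
    rw [← myCardValGe n s hs]
    refine Finset.card_le_card_of_injOn (fun p => p.2) ?_ ?_
    · intro p hp
      simp only [Finset.mem_coe, hW, Finset.mem_filter, Finset.mem_univ, true_and] at hp ⊢
      exact hp.2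
    · intro p hp q hq hpq
      have hpq' : p.2 = q.2 := hpq
      simp only [Finset.coe_filter, Set.mem_setOf_eq, hW, Finset.mem_filter,
        Finset.mem_univ, true_and] at hp hq
      have : L p.1 p.2 = L q.1 p.2 := by rw [hp.1.2, hpq']; exact hq.1.2.symm
      have h2 := hLcol p.2 this
      exact Prod.ext h2 hpq'
  rw [← hAW] at hsplit
  omega

theorem bwd (n r s : ℕ) (hr : r ≤ n) (hs : s ≤ n)
    (P : Fin n → Fin n → Option (Fin n))
    (hP : IsPartialLatinSquare P)
    (hfill : ∀ i j : Fin n, P i j ≠ none ↔ (i.val < r ∧ j.val < s))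
    (h : ∀ t : Fin n,
      r + s - n ≤ (Finset.univ.filter fun p : Fin n × Fin n => P p.1 p.2 = some t).card) :
    Completable P := by
  classical
  rcases Nat.eq_zero_or_pos n with hn | hn
  · subst hn
    exact ⟨fun i => i.elim0, ⟨fun i => i.elim0, fun j => j.elim0⟩, fun i => i.elim0⟩
  obtain ⟨hProw, hPcol⟩ := hP
  haveI : Inhabited (Fin n) := ⟨⟨0, hn⟩⟩
  set Q : Fin n → Fin n → Fin n := fun i j => (P i j).iget with hQdef
  have hQ : ∀ i j : Fin n, i.val < r → j.val < s → P i j = some (Q i j) := by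
    intro i j hi hj
    have hne := (hfill i j).mpr ⟨hi, hj⟩
    cases hPij : P i j with
    | none => exact absurd hPij hne
    | some u => simp [hQdef, hPij]
  have hQval : ∀ (i j t : Fin n), P i j = some t → Q i j = t := by
    intro i j t ht
    simp [hQdef, ht]
  -- (1) each row of the rectangle contains exactly s symbols
  have rowContent : ∀ i : Fin n, i.val < r →
      (univ.filter fun t : Fin n => ∃ j, P i j = some t).card = s := by
    intro i hi
    rw [← myCardValLt n s hs]
    refine (Finset.card_bij (fun j _ => Q i j) ?_ ?_ ?_).symm
    · intro j hj
      simp only [Finset.mem_filter, Finset.mem_univ, true_and] at hj ⊢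
      exact ⟨j, hQ i j hi hj⟩
    · intro j1 h1 j2 h2 heq
      have heq' : Q i j1 = Q i j2 := heq
      simp only [Finset.mem_filter, Finset.mem_univ, true_and] at h1 h2
      have e1 := hQ i j1 hi h1
      have e2 := hQ i j2 hi h2
      rw [heq'] at e1
      exact hProw i j1 j2 (Q i j2) e1 e2
    · intro t ht
      simp only [Finset.mem_filter, Finset.mem_univ, true_and] at ht
      obtain ⟨j, hj⟩ := ht
      have hjs := ((hfill i j).mp (by simp [hj])).2
      exact ⟨j, by simp [hjs], hQval i j t hj⟩
  -- counts
  set N : Fin n → ℕ :=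
    fun t => (univ.filter fun p : Fin n × Fin n => P p.1 p.2 = some t).card with hNdef
  set d : Fin n → ℕ :=
    fun t => (univ.filter fun i : Fin n => i.val < r ∧ ¬∃ j, P i j = some t).card with hddef
  have hNrow : ∀ t, N t = (univ.filter fun i : Fin n => ∃ j, P i j = some t).card := by
    intro t
    refine Finset.card_bij (fun p _ => p.1) ?_ ?_ ?_
    · intro p hp
      simp only [Finset.mem_filter, Finset.mem_univ, true_and] at hp ⊢
      exact ⟨p.2, hp⟩
    · intro p hp q hq hpq
      have hpq' : p.1 = q.1 := hpq
      simp only [Finset.mem_filter, Finset.mem_univ, true_and] at hp hq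
      rw [hpq'] at hp
      exact Prod.ext hpq' (hProw q.1 p.2 q.2 t hp hq)
    · intro i hi
      simp only [Finset.mem_filter, Finset.mem_univ, true_and] at hi
      obtain ⟨j, hj⟩ := hi
      exact ⟨(i, j), by simp [hj], rfl⟩
  have hdN : ∀ t, d t + N t = r := by
    intro t
    rw [hNrow]
    have hsub : (univ.filter fun i : Fin n => ∃ j, P i j = some t)
        = (univ.filter fun i : Fin n => i.val < r).filter fun i => ∃ j, P i j = some t := by
      ext i
      simp only [Finset.mem_filter, Finset.mem_univ, true_and]
      constructor
      · intro hi
        obtain ⟨j, hj⟩ := hi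
        exact ⟨((hfill i j).mp (by simp [hj])).1, ⟨j, hj⟩⟩
      · exact fun hi => hi.2
    have hsub2 : (univ.filter fun i : Fin n => i.val < r ∧ ¬∃ j, P i j = some t)
        = (univ.filter fun i : Fin n => i.val < r).filter fun i => ¬∃ j, P i j = some t := by
      rw [Finset.filter_filter]
    have hsplit := Finset.card_filter_add_card_filter_not
      (s := univ.filter fun i : Fin n => i.val < r) (p := fun i => ∃ j, P i j = some t)
    rw [myCardValLt n r hr] at hsplit
    rw [hddef]
    simp only
    rw [hsub2, hsub]
    omega
  have hdle : ∀ t, d t ≤ n - s := by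
    intro t
    have h1 := h t
    have h2 := hdN t
    rw [hNdef] at h2
    simp only at h1 h2
    omega
  set e : Fin n → ℕ := fun t => (n - s) - d t with hedef
  have hed : ∀ t, e t + d t = n - s := by
    intro t
    have := hdle t
    simp only [hedef]
    omega
  -- (7) per-row missing count
  have rowMiss : ∀ i : Fin n, i.val < r →
      (univ.filter fun t : Fin n => ¬∃ j, P i j = some t).card = n - s := by
    intro i hi
    have h1 := Finset.card_filter_add_card_filter_not
      (s := (univ : Finset (Fin n))) (p := fun t => ∃ j, P i j = some t)
    rw [rowContent i hi, Finset.card_univ, Fintype.card_fin] at h1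
    omega
  -- (8) transport
  set ρ : Fin n → ℕ := fun i => if i.val < r then 0 else n - s with hρdef
  have hSr : ∑ i, ρ i = (n - r) * (n - s) := by
    have : ∑ i, ρ i = ∑ i ∈ univ.filter (fun i : Fin n => ¬ i.val < r), (n - s) := by
      rw [Finset.sum_filter]
      refine Finset.sum_congr rfl (fun i _ => ?_)
      by_cases hi : i.val < r <;> simp [hρdef, hi]
    rw [this, Finset.sum_const, myCardValGe n r hr, smul_eq_mul]
  have hSd : ∑ t, d t = r * (n - s) := by
    have h1 : ∀ t, d t = ∑ i : Fin n, if i.val < r ∧ ¬∃ j, P i j = some t then 1 else 0 := by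
      intro t
      rw [hddef]
      simp only
      rw [Finset.card_filter]
    have h2 : ∑ t, d t
        = ∑ i : Fin n, ∑ t : Fin n, if i.val < r ∧ ¬∃ j, P i j = some t then 1 else 0 := by
      rw [← Finset.sum_comm]
      exact Finset.sum_congr rfl (fun t _ => h1 t)
    rw [h2]
    have h3 : ∀ i : Fin n,
        (∑ t : Fin n, if i.val < r ∧ ¬∃ j, P i j = some t then 1 else 0)
          = if i.val < r then n - s else 0 := by
      intro i
      by_cases hi : i.val < r
      · rw [if_pos hi, ← rowMiss i hi, Finset.card_filter]
        exact Finset.sum_congr rfl (fun t _ => by simp [hi])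
      · rw [if_neg hi]
        exact Finset.sum_eq_zero (fun t _ => by simp [hi])
    rw [Finset.sum_congr rfl (fun i _ => h3 i)]
    have : ∑ i : Fin n, (if i.val < r then n - s else 0)
        = ∑ i ∈ univ.filter (fun i : Fin n => i.val < r), (n - s) := by
      rw [Finset.sum_filter]
    rw [this, Finset.sum_const, myCardValLt n r hr, smul_eq_mul]
  have hSre : ∑ i, ρ i = ∑ t, e t := by
    have h1 : ∑ t, e t + ∑ t, d t = n * (n - s) := by
      rw [← Finset.sum_add_distrib]
      rw [Finset.sum_congr rfl (fun t _ => hed t), Finset.sum_const, Finset.card_univ,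
        Fintype.card_fin, smul_eq_mul]
    have h2 : (n - r) * (n - s) + r * (n - s) = n * (n - s) := by
      rw [← Nat.add_mul]
      congr 1
      omega
    omega
  obtain ⟨X, hX1, hX2⟩ := myTransport ρ e hSre
  -- (9) phase 1 matrix
  set M1 : Fin n → Fin n → ℕ :=
    fun i t => (if i.val < r ∧ ¬∃ j, P i j = some t then 1 else 0) + X i t with hM1def
  have hM1row : ∀ i, ∑ t, M1 i t = n - s := by
    intro i
    rw [hM1def]
    simp only
    rw [Finset.sum_add_distrib, hX1]
    by_cases hi : i.val < r
    · have h1 : (∑ t : Fin n, if i.val < r ∧ ¬∃ j, P i j = some t then 1 else 0) = n - s := by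
        rw [← rowMiss i hi, Finset.card_filter]
        exact Finset.sum_congr rfl (fun t _ => by simp [hi])
      rw [h1, hρdef]
      simp [hi]
    · have h1 : (∑ t : Fin n, if i.val < r ∧ ¬∃ j, P i j = some t then 1 else 0) = 0 :=
        Finset.sum_eq_zero (fun t _ => by simp [hi])
      rw [h1, hρdef]
      simp [hi]
  have hM1col : ∀ t, ∑ i, M1 i t = n - s := by
    intro t
    rw [hM1def]
    simp only
    rw [Finset.sum_add_distrib, hX2]
    have h1 : (∑ i : Fin n, if i.val < r ∧ ¬∃ j, P i j = some t then 1 else 0) = d t := by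
      rw [hddef]
      simp only
      rw [Finset.card_filter]
    rw [h1]
    have := hed t
    omega
  obtain ⟨σ, hσ⟩ := myDecompose (n - s) M1 hM1row hM1col
  -- (10) the r × n rectangle
  set R : Fin n → Fin n → Fin n :=
    fun i j => if hj : j.val < s then Q i j
      else σ ⟨j.val - s, by have := j.isLt; omega⟩ i with hRdef
  have hXzero : ∀ i t : Fin n, i.val < r → X i t = 0 := by
    intro i t hi
    have h1 := hX1 i
    rw [hρdef] at h1
    simp only [if_pos hi] at h1
    exact Finset.sum_eq_zero_iff.mp h1 t (mem_univ t)
  have hRlt : ∀ (i j : Fin n), j.val < s → R i j = Q i j := by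
    intro i j hj
    rw [hRdef]
    exact dif_pos hj
  have hRge : ∀ (i j : Fin n) (hj : ¬ j.val < s),
      R i j = σ ⟨j.val - s, by have := j.isLt; omega⟩ i := by
    intro i j hj
    rw [hRdef]
    exact dif_neg hj
  -- (12) every symbol occurs exactly once in each row < r of R
  have hRrow1 : ∀ i t : Fin n, i.val < r → (univ.filter fun j => R i j = t).card = 1 := by
    intro i t hi
    have hsplit := Finset.card_filter_add_card_filter_not
      (s := univ.filter fun j : Fin n => R i j = t) (p := fun j : Fin n => j.val < s)
    rw [Finset.filter_filter, Finset.filter_filter] at hsplit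
    have hA2 : (univ.filter fun j : Fin n => R i j = t ∧ ¬ j.val < s).card = M1 i t := by
      rw [← hσ i t, ← Finset.card_filter]
      refine (Finset.card_bij (fun k _ => (⟨s + k.val, by have := k.isLt; omega⟩ : Fin n))
        ?_ ?_ ?_).symm
      · intro k hk
        simp only [Finset.mem_filter, Finset.mem_univ, true_and] at hk ⊢
        have hns : ¬ ((⟨s + k.val, by have := k.isLt; omega⟩ : Fin n).val < s) := by
          simp only [Fin.val_mk]
          omega
        refine ⟨?_, hns⟩
        rw [hRge i _ hns]
        have hfin : (⟨(⟨s + k.val, by have := k.isLt; omega⟩ : Fin n).val - s,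
            by have := k.isLt; simp only [Fin.val_mk]; omega⟩ : Fin (n - s)) = k := by
          apply Fin.ext
          simp only [Fin.val_mk]
          omega
        rw [hfin]
        exact hk
      · intro k1 h1 k2 h2 heq
        have : s + k1.val = s + k2.val := congrArg Fin.val heq
        exact Fin.ext (by omega)
      · intro j hj
        simp only [Finset.mem_filter, Finset.mem_univ, true_and] at hj
        obtain ⟨hjt, hjs⟩ := hj
        refine ⟨⟨j.val - s, by have := j.isLt; omega⟩, ?_, ?_⟩
        · simp only [Finset.mem_filter, Finset.mem_univ, true_and]
          rw [hRge i j hjs] at hjt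
          exact hjt
        · apply Fin.ext
          simp only [Fin.val_mk]
          omega
    have hA1 : (univ.filter fun j : Fin n => R i j = t ∧ j.val < s).card
        = if (∃ j, P i j = some t) then 1 else 0 := by
      by_cases hex : ∃ j, P i j = some t
      · rw [if_pos hex]
        obtain ⟨j0, hj0⟩ := hex
        have hj0s : j0.val < s := ((hfill i j0).mp (by simp [hj0])).2
        have : (univ.filter fun j : Fin n => R i j = t ∧ j.val < s) = {j0} := by
          ext j
          simp only [Finset.mem_filter, Finset.mem_univ, true_and, Finset.mem_singleton]
          constructor
          · rintro ⟨hjt, hjs⟩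
            rw [hRlt i j hjs] at hjt
            have e1 : P i j = some t := by rw [hQ i j hi hjs, hjt]
            exact hProw i j j0 t e1 hj0
          · intro hj
            refine ⟨?_, by rw [hj]; exact hj0s⟩
            rw [hj, hRlt i j0 hj0s]
            exact hQval i j0 t hj0
        rw [this, Finset.card_singleton]
      · rw [if_neg hex]
        rw [Finset.card_eq_zero]
        rw [Finset.filter_eq_empty_iff]
        intro j _
        rintro ⟨hjt, hjs⟩
        rw [hRlt i j hjs] at hjt
        exact hex ⟨j, by rw [hQ i j hi hjs, hjt]⟩
    have hM1val : M1 i t = if (∃ j, P i j = some t) then 0 else 1 := by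
      rw [hM1def]
      simp only
      rw [hXzero i t hi]
      by_cases hex : ∃ j, P i j = some t <;> simp [hex, hi]
    rw [hA1, hA2, hM1val] at hsplit
    by_cases hex : ∃ j, P i j = some t <;> simp [hex] at hsplit <;> omega
  -- (13),(14)
  have hRrowInj : ∀ i : Fin n, i.val < r → Function.Injective (R i) := by
    intro i hi j1 j2 heq
    have h1 := hRrow1 i (R i j1) hi
    have hle : (univ.filter fun j => R i j = R i j1).card ≤ 1 := le_of_eq h1
    rw [Finset.card_le_one] at hle
    exact hle j1 (by simp) j2 (by simp [heq])
  have hRcolInj : ∀ (j i1 i2 : Fin n), i1.val < r → i2.val < r → R i1 j = R i2 j → i1 = i2 := by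
    intro j i1 i2 h1 h2 heq
    by_cases hjs : j.val < s
    · rw [hRlt i1 j hjs, hRlt i2 j hjs] at heq
      have e1 := hQ i1 j h1 hjs
      have e2 := hQ i2 j h2 hjs
      rw [heq] at e1
      exact hPcol i1 i2 j (Q i2 j) e1 e2
    · rw [hRge i1 j hjs, hRge i2 j hjs] at heq
      exact (σ _).injective heq
  -- (15)-(17)
  set colOcc : Fin n → Fin n → ℕ :=
    fun j t => (univ.filter fun i : Fin n => i.val < r ∧ R i j = t).card with hcolOccdef
  have hOccle1 : ∀ j t, colOcc j t ≤ 1 := by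
    intro j t
    rw [hcolOccdef]
    simp only
    rw [Finset.card_le_one]
    intro i1 hi1 i2 hi2
    simp only [Finset.mem_filter, Finset.mem_univ, true_and] at hi1 hi2
    refine hRcolInj j i1 i2 hi1.1 hi2.1 (by rw [hi1.2, hi2.2])
  have hOccSumt : ∀ j, ∑ t, colOcc j t = r := by
    intro j
    have h1 : ∑ t, colOcc j t
        = ∑ i : Fin n, ∑ t : Fin n, if i.val < r ∧ R i j = t then 1 else 0 := by
      rw [← Finset.sum_comm]
      refine Finset.sum_congr rfl (fun t _ => ?_)
      rw [hcolOccdef]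
      simp only
      rw [Finset.card_filter]
    rw [h1]
    have h2 : ∀ i : Fin n, (∑ t : Fin n, if i.val < r ∧ R i j = t then 1 else 0)
        = if i.val < r then 1 else 0 := by
      intro i
      by_cases hi : i.val < r
      · simp only [hi, true_and, if_true]
        rw [Finset.sum_ite_eq univ (R i j) (fun _ => 1)]
        simp
      · simp [hi]
    rw [Finset.sum_congr rfl (fun i _ => h2 i)]
    rw [← Finset.card_filter, myCardValLt n r hr]
  have hOccSumj : ∀ t, ∑ j, colOcc j t = r := by
    intro t
    have h1 : ∑ j, colOcc j t
        = ∑ i : Fin n, ∑ j : Fin n, if i.val < r ∧ R i j = t then 1 else 0 := by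
      rw [← Finset.sum_comm]
      refine Finset.sum_congr rfl (fun j _ => ?_)
      rw [hcolOccdef]
      simp only
      rw [Finset.card_filter]
    rw [h1]
    have h2 : ∀ i : Fin n, (∑ j : Fin n, if i.val < r ∧ R i j = t then 1 else 0)
        = if i.val < r then 1 else 0 := by
      intro i
      by_cases hi : i.val < r
      · simp only [hi, true_and, if_true]
        have hcf := hRrow1 i t hi
        rw [Finset.card_filter] at hcf
        exact hcf
      · simp [hi]
    rw [Finset.sum_congr rfl (fun i _ => h2 i)]
    rw [← Finset.card_filter, myCardValLt n r hr]
  -- (18) phase 2 matrix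
  set M2 : Fin n → Fin n → ℕ := fun j t => if colOcc j t = 0 then 1 else 0 with hM2def
  have sumZero : ∀ (f : Fin n → ℕ), (∀ x, f x ≤ 1) → ∑ x, f x = r →
      (∑ x, if f x = 0 then 1 else 0) = n - r := by
    intro f hle hsum
    have h1 : ∑ x, f x = ∑ x, if f x = 0 then 0 else 1 := by
      refine Finset.sum_congr rfl (fun x _ => ?_)
      have := hle x
      interval_cases h : f x <;> simp
    have h2 : (∑ x, if f x = 0 then 1 else 0) + (∑ x, if f x = 0 then 0 else 1) = n := by
      rw [← Finset.sum_add_distrib]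
      have : ∀ x : Fin n, ((if f x = 0 then 1 else 0) + if f x = 0 then 0 else 1) = 1 := by
        intro x
        by_cases hx : f x = 0 <;> simp [hx]
      rw [Finset.sum_congr rfl (fun x _ => this x), Finset.sum_const, Finset.card_univ,
        Fintype.card_fin, smul_eq_mul, mul_one]
    omega
  have hM2row : ∀ j, ∑ t, M2 j t = n - r := fun j =>
    sumZero (colOcc j) (hOccle1 j) (hOccSumt j)
  have hM2col : ∀ t, ∑ j, M2 j t = n - r := fun t =>
    sumZero (fun j => colOcc j t) (fun j => hOccle1 j t) (hOccSumj t)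
  obtain ⟨τ, hτ⟩ := myDecompose (n - r) M2 hM2row hM2col
  -- (19) final square
  set L : Fin n → Fin n → Fin n := fun i j => if hi : i.val < r then R i j
    else τ ⟨i.val - r, by have := i.isLt; omega⟩ j with hLdef
  have hLlt : ∀ (i j : Fin n), i.val < r → L i j = R i j := by
    intro i j hi
    rw [hLdef]
    exact dif_pos hi
  have hLge : ∀ (i j : Fin n) (hi : ¬ i.val < r),
      L i j = τ ⟨i.val - r, by have := i.isLt; omega⟩ j := by
    intro i j hi
    rw [hLdef]
    exact dif_neg hi
  have hτinj : ∀ (j : Fin n) (k1 k2 : Fin (n - r)), τ k1 j = τ k2 j → k1 = k2 := by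
    intro j k1 k2 heq
    by_contra hne
    have hM2le : M2 j (τ k1 j) ≤ 1 := by
      rw [hM2def]
      simp only
      split <;> omega
    rw [← hτ j (τ k1 j)] at hM2le
    have hsum2 : 2 ≤ ∑ k : Fin (n - r), if τ k j = τ k1 j then 1 else 0 := by
      rw [← Finset.sum_erase_add _ _ (mem_univ k1)]
      have t1 : (if τ k1 j = τ k1 j then 1 else 0) = 1 := by simp
      have t2 : 1 ≤ ∑ k ∈ univ.erase k1, if τ k j = τ k1 j then 1 else 0 := by
        refine le_trans ?_ (Finset.single_le_sum (f := fun k : Fin (n - r) =>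
          if τ k j = τ k1 j then 1 else 0) (fun _ _ => Nat.zero_le _)
          (Finset.mem_erase.mpr ⟨Ne.symm hne, mem_univ k2⟩))
        show 1 ≤ if τ k2 j = τ k1 j then 1 else 0
        rw [if_pos heq.symm]
      omega
    omega
  have key : ∀ (j : Fin n) (k : Fin (n - r)) (i : Fin n), i.val < r → R i j ≠ τ k j := by
    intro j k i hi hcon
    have hM2ge : 1 ≤ M2 j (τ k j) := by
      rw [← hτ j (τ k j)]
      refine le_trans ?_ (Finset.single_le_sum (f := fun k' : Fin (n - r) =>
        if τ k' j = τ k j then 1 else 0) (fun _ _ => Nat.zero_le _) (mem_univ k))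
      simp
    have hocc0 : colOcc j (τ k j) = 0 := by
      rw [hM2def] at hM2ge
      simp only at hM2ge
      by_contra hc
      rw [if_neg hc] at hM2ge
      omega
    have hmem : i ∈ univ.filter fun i' : Fin n => i'.val < r ∧ R i' j = τ k j := by
      simp only [Finset.mem_filter, Finset.mem_univ, true_and]
      exact ⟨hi, hcon⟩
    rw [hcolOccdef] at hocc0
    simp only at hocc0
    rw [Finset.card_eq_zero] at hocc0
    rw [hocc0] at hmem
    exact absurd hmem (Finset.notMem_empty i)
  refine ⟨L, ⟨?_, ?_⟩, ?_⟩
  · -- rows injective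
    intro i j1 j2 heq
    by_cases hi : i.val < r
    · rw [hLlt i j1 hi, hLlt i j2 hi] at heq
      exact hRrowInj i hi heq
    · rw [hLge i j1 hi, hLge i j2 hi] at heq
      exact (τ _).injective heq
  · -- columns injective
    intro j i1 i2 heq
    simp only at heq
    by_cases h1 : i1.val < r <;> by_cases h2 : i2.val < r
    · rw [hLlt i1 j h1, hLlt i2 j h2] at heq
      exact hRcolInj j i1 i2 h1 h2 heq
    · rw [hLlt i1 j h1, hLge i2 j h2] at heq
      exact absurd heq (key j _ i1 h1)
    · rw [hLge i1 j h1, hLlt i2 j h2] at heq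
      exact absurd heq.symm (key j _ i2 h2)
    · rw [hLge i1 j h1, hLge i2 j h2] at heq
      have hkk := hτinj j _ _ heq
      have hv : i1.val - r = i2.val - r := congrArg Fin.val hkk
      exact Fin.ext (by omega)
  · -- completion
    intro i j t ht
    have hij := (hfill i j).mp (by simp [ht])
    rw [hLlt i j hij.1, hRlt i j hij.2]
    exact hQval i j t ht

end RyserAux

/-- (Ryser) Let `r, s ≤ n` and let `P` be an `n × n` partial Latin square whose filled
cells are exactly those of the upper-left `r × s` rectangle. Then `P` is completable if
and only if every symbol occurs at least `r + s - n` times in that rectangle. -/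
theorem stmt_13 (n r s : ℕ) (hr : r ≤ n) (hs : s ≤ n)
    (P : Fin n → Fin n → Option (Fin n))
    (hP : IsPartialLatinSquare P)
    (hfill : ∀ i j : Fin n, P i j ≠ none ↔ (i.val < r ∧ j.val < s)) :
    Completable P ↔
      ∀ t : Fin n,
        r + s - n ≤ (Finset.univ.filter fun p : Fin n × Fin n => P p.1 p.2 = some t).card := by
  constructor
  · exact fun hC => fwd n r s hr hs P hP hfill hC
  · exact fun h => bwd n r s hr hs P hP hfill h
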